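/- Optimality at infinity via oscillation, 1D model case: for any λ > 1, a > 0, and ε ∈ (0, 2/a), the equation -y'' = λ (2t - at²)^{-2} y admits a solution on (0, ε) with infinitely many zeros accumulating at 0; consequently no positive solution exists on (0, ε). -/

import Mathlib

open Real Set

noncomputable def rr (a t : ℝ) : ℝ := 2*t - a*t^2
noncomputable def th (a ξ t : ℝ) : ℝ := ξ/2 * (Real.log t - Real.log (2 - a*t))
noncomputable def uu (a ξ t : ℝ) : ℝ := Real.sqrt (rr a t) * Real.cos (th a ξ t)
noncomputable def vv (a ξ t : ℝ) : ℝ :=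
  (Real.sqrt (rr a t))⁻¹ * ((1 - a*t) * Real.cos (th a ξ t) - ξ * Real.sin (th a ξ t))

variable {a ξ t : ℝ}

lemma two_sub_pos (ha : 0 < a) (ht : t ∈ Ioo (0:ℝ) (2/a)) : 0 < 2 - a*t := by
  have := ht.2; rw [lt_div_iff₀ ha] at this; linarith

lemma r_pos (ha : 0 < a) (ht : t ∈ Ioo (0:ℝ) (2/a)) : 0 < rr a t := by
  have h2 := two_sub_pos ha ht
  have h1 := ht.1
  have : rr a t = t * (2 - a*t) := by unfold rr; ring
  rw [this]; positivity

lemma hasDerivAt_rr : HasDerivAt (rr a) (2 - 2*a*t) t := by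
  unfold rr
  have h : HasDerivAt (fun t : ℝ => 2*t - a*t^2) (2*1 - a*(2*t^1)) t :=
    ((hasDerivAt_id t).const_mul 2).sub (((hasDerivAt_pow 2 t)).const_mul a)
  convert h using 1; ring

lemma hasDerivAt_th (ha : 0 < a) (ht : t ∈ Ioo (0:ℝ) (2/a)) :
    HasDerivAt (th a ξ) (ξ / rr a t) t := by
  have h1 := ht.1
  have h2 := two_sub_pos ha ht
  have hg : HasDerivAt (fun t : ℝ => 2 - a*t) (-a) t := by
    have : HasDerivAt (fun t : ℝ => 2 - a*t) (0 - a*1) t :=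
      (hasDerivAt_const t 2).sub ((hasDerivAt_id t).const_mul a)
    convert this using 1; ring
  have hlog2 : HasDerivAt (fun t : ℝ => Real.log (2 - a*t)) (-a / (2 - a*t)) t :=
    hg.log (ne_of_gt h2)
  have h : HasDerivAt (th a ξ) (ξ/2 * (t⁻¹ - (-a / (2 - a*t)))) t :=
    ((Real.hasDerivAt_log (ne_of_gt h1)).sub hlog2).const_mul (ξ/2)
  convert h using 1
  have hr := r_pos ha ht
  unfold rr at *
  rw [show 2*t - a*t^2 = t*(2-a*t) by ring]
  have e1 : t⁻¹ * t = 1 := inv_mul_cancel₀ (ne_of_gt h1)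
  have e2 : (2-a*t)⁻¹ * (2-a*t) = 1 := inv_mul_cancel₀ (ne_of_gt h2)
  rw [div_eq_iff (mul_ne_zero (ne_of_gt h1) (ne_of_gt h2)), div_eq_mul_inv (-a)]
  linear_combination (-(ξ/2*(2-a*t))) * e1 + (-(ξ/2*a*t)) * e2

lemma hasDerivAt_uu (ha : 0 < a) (ht : t ∈ Ioo (0:ℝ) (2/a)) :
    HasDerivAt (uu a ξ) (vv a ξ t) t := by
  have hr := r_pos ha ht
  have hs : (0:ℝ) < Real.sqrt (rr a t) := Real.sqrt_pos.mpr hr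
  have hsq : Real.sqrt (rr a t) ^ 2 = rr a t := Real.sq_sqrt hr.le
  have h1 : HasDerivAt (fun t => Real.sqrt (rr a t)) ((2 - 2*a*t) / (2 * Real.sqrt (rr a t))) t :=
    hasDerivAt_rr.sqrt (ne_of_gt hr)
  have h2 : HasDerivAt (fun t => Real.cos (th a ξ t)) (-Real.sin (th a ξ t) * (ξ / rr a t)) t :=
    (hasDerivAt_th ha ht).cos
  have h := h1.mul h2
  convert h using 1
  · rfl
  · rfl
  · rfl
  unfold vv
  set s := Real.sqrt (rr a t)
  set C := Real.cos (th a ξ t)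
  set S := Real.sin (th a ξ t)
  field_simp
  linear_combination (ξ*S) * hsq

lemma hasDerivAt_vv (ha : 0 < a) (ht : t ∈ Ioo (0:ℝ) (2/a)) :
    HasDerivAt (vv a ξ) (-((1+ξ^2) * (rr a t ^ 2)⁻¹ * uu a ξ t)) t := by
  have hr := r_pos ha ht
  have hs : (0:ℝ) < Real.sqrt (rr a t) := Real.sqrt_pos.mpr hr
  have hsq : Real.sqrt (rr a t) ^ 2 = rr a t := Real.sq_sqrt hr.le
  have h1 : HasDerivAt (fun t => Real.sqrt (rr a t)) ((2 - 2*a*t) / (2 * Real.sqrt (rr a t))) t :=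
    hasDerivAt_rr.sqrt (ne_of_gt hr)
  have hinv : HasDerivAt (fun t => (Real.sqrt (rr a t))⁻¹)
      (-((2 - 2*a*t) / (2 * Real.sqrt (rr a t))) / (Real.sqrt (rr a t))^2) t := h1.inv (ne_of_gt hs)
  have hth := hasDerivAt_th (ξ := ξ) ha ht
  have hcos : HasDerivAt (fun t => Real.cos (th a ξ t)) (-Real.sin (th a ξ t) * (ξ / rr a t)) t := hth.cos
  have hsin : HasDerivAt (fun t => Real.sin (th a ξ t)) (Real.cos (th a ξ t) * (ξ / rr a t)) t := hth.sin
  have hlin : HasDerivAt (fun t : ℝ => 1 - a*t) (-a) t := by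
    have : HasDerivAt (fun t : ℝ => 1 - a*t) (0 - a*1) t :=
      (hasDerivAt_const t 1).sub ((hasDerivAt_id t).const_mul a)
    convert this using 1; ring
  have hw : HasDerivAt (fun t => (1 - a*t) * Real.cos (th a ξ t) - ξ * Real.sin (th a ξ t))
      ((-a) * Real.cos (th a ξ t) + (1 - a*t) * (-Real.sin (th a ξ t) * (ξ / rr a t))
        - ξ * (Real.cos (th a ξ t) * (ξ / rr a t))) t :=
    (hlin.mul hcos).sub (hsin.const_mul ξ)
  have h := hinv.mul hw
  convert h using 1
  · rfl
  · rfl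
  · rfl
  unfold uu
  set s := Real.sqrt (rr a t) with hsdef
  set C := Real.cos (th a ξ t)
  set S := Real.sin (th a ξ t)
  have hR : rr a t = 2*t - a*t^2 := rfl
  set R := rr a t with hRdef
  have hs2 : s^2 = 2*t - a*t^2 := hsq.trans hR
  field_simp
  rw [← hsq]
  linear_combination (a*C*s^4) * hs2

lemma continuousOn_th (ha : 0 < a) {t1 t2 : ℝ} (h1 : 0 < t1) (h2 : t2 < 2/a) :
    ContinuousOn (th a ξ) (Icc t1 t2) := fun x hx =>
  ((hasDerivAt_th ha ⟨lt_of_lt_of_le h1 hx.1, lt_of_le_of_lt hx.2 h2⟩).continuousAt).continuousWithinAt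

lemma exists_th_eq (ha : 0 < a) (hξ : 0 < ξ) {δ c : ℝ} (hδ : δ ∈ Ioo (0:ℝ) (2/a))
    (hc : c ≤ th a ξ δ) : ∃ t ∈ Ioc (0:ℝ) δ, th a ξ t = c := by
  set t0 := min δ (min (1/a) (Real.exp (2*c/ξ)/2)) with ht0
  have h0 : 0 < t0 := lt_min hδ.1 (lt_min (by positivity) (by positivity))
  have h0δ : t0 ≤ δ := min_le_left _ _
  have h0a : t0 ≤ 1/a := le_trans (min_le_right _ _) (min_le_left _ _)
  have h0e : t0 ≤ Real.exp (2*c/ξ)/2 := le_trans (min_le_right _ _) (min_le_right _ _)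
  have hlow : th a ξ t0 ≤ c := by
    have hat0 : a * t0 ≤ 1 := by
      rw [le_div_iff₀ ha] at h0a; linarith
    have hl2 : 0 ≤ Real.log (2 - a*t0) := Real.log_nonneg (by linarith)
    have hlt : Real.log t0 ≤ 2*c/ξ := by
      have h1 : Real.log t0 ≤ Real.log (Real.exp (2*c/ξ)/2) := Real.log_le_log h0 h0e
      have h2 : Real.log (Real.exp (2*c/ξ)/2) = 2*c/ξ - Real.log 2 := by
        rw [Real.log_div (Real.exp_ne_zero _) two_ne_zero, Real.log_exp]
      have h3 : (0:ℝ) ≤ Real.log 2 := Real.log_nonneg (by norm_num)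
      linarith
    have key : ξ/2 * (Real.log t0 - Real.log (2 - a*t0)) ≤ ξ/2 * (2*c/ξ) := by
      apply mul_le_mul_of_nonneg_left (by linarith) (by linarith)
    have : ξ/2 * (2*c/ξ) = c := by field_simp
    unfold th; linarith
  obtain ⟨x, hxm, hxe⟩ := intermediate_value_Icc h0δ (continuousOn_th ha h0 hδ.2) ⟨hlow, hc⟩
  exact ⟨x, ⟨lt_of_lt_of_le h0 hxm.1, hxm.2⟩, hxe⟩

theorem oscillation_and_no_positive_solution
    (a lam ε : ℝ) (ha : 0 < a) (hlam : 1 < lam) (hε : ε ∈ Ioo (0 : ℝ) (2 / a)) :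
    (∃ y : ℝ → ℝ,
      (∀ t ∈ Ioo (0 : ℝ) ε,
        deriv (deriv y) t = -(lam * ((2 * t - a * t ^ 2) ^ 2)⁻¹ * y t)) ∧
      (∃ t ∈ Ioo (0 : ℝ) ε, y t ≠ 0) ∧
      (∀ δ ∈ Ioo (0 : ℝ) ε, ∃ t ∈ Ioo (0 : ℝ) δ, y t = 0)) ∧
    ¬ ∃ y : ℝ → ℝ,
      (∀ t ∈ Ioo (0 : ℝ) ε,
        deriv (deriv y) t = -(lam * ((2 * t - a * t ^ 2) ^ 2)⁻¹ * y t)) ∧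
      (∀ t ∈ Ioo (0 : ℝ) ε, 0 < y t) := by
  set ξ := Real.sqrt (lam - 1) with hξdef
  have hξ : 0 < ξ := Real.sqrt_pos.mpr (by linarith)
  have hξ2 : ξ^2 = lam - 1 := Real.sq_sqrt (by linarith)
  have hlamξ : 1 + ξ^2 = lam := by linarith
  have hπ : (0:ℝ) < π := Real.pi_pos
  have hsub : ∀ {t : ℝ}, t ∈ Ioo (0:ℝ) ε → t ∈ Ioo (0:ℝ) (2/a) :=
    fun ht => ⟨ht.1, lt_trans ht.2 hε.2⟩
  constructor
  · refine ⟨uu a ξ, ?_, ?_, ?_⟩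
    · intro t ht
      have ht' := hsub ht
      have hev : deriv (uu a ξ) =ᶠ[nhds t] vv a ξ := by
        filter_upwards [isOpen_Ioo.mem_nhds ht'] with x hx
        exact (hasDerivAt_uu ha hx).deriv
      rw [hev.deriv_eq, (hasDerivAt_vv ha ht').deriv, hlamξ]
      rfl
    · -- nonzero point
      have hε2 : ε/2 ∈ Ioo (0:ℝ) (2/a) := ⟨by linarith [hε.1], by linarith [hε.1, hε.2]⟩
      set k : ℤ := ⌊th a ξ (ε/2) / π⌋ with hk
      have hck : (k:ℝ) * π ≤ th a ξ (ε/2) := by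
        have h1 : ((k:ℝ)) ≤ th a ξ (ε/2) / π := by exact_mod_cast Int.floor_le _
        rw [le_div_iff₀ hπ] at h1; linarith
      obtain ⟨x, hx, hxe⟩ := exists_th_eq ha hξ hε2 hck
      refine ⟨x, ⟨hx.1, lt_of_le_of_lt hx.2 (by linarith [hε.1])⟩, ?_⟩
      have hx' : x ∈ Ioo (0:ℝ) (2/a) := ⟨hx.1, lt_of_le_of_lt hx.2 hε2.2⟩
      have hrp := r_pos ha hx'
      have hsp : (0:ℝ) < Real.sqrt (rr a x) := Real.sqrt_pos.mpr hrp
      have hsin : Real.sin (th a ξ x) = 0 := by rw [hxe]; exact Real.sin_int_mul_pi k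
      have hcos : Real.cos (th a ξ x) ≠ 0 := by
        intro h
        have := Real.sin_sq_add_cos_sq (th a ξ x)
        rw [hsin, h] at this; norm_num at this
      unfold uu
      exact mul_ne_zero (ne_of_gt hsp) hcos
    · -- zeros accumulate
      intro δ hδ
      have hδ2 : δ/2 ∈ Ioo (0:ℝ) (2/a) := ⟨by linarith [hδ.1], by linarith [hδ.1, hδ.2, hε.2]⟩
      set k : ℤ := ⌊(th a ξ (δ/2) - π/2) / π⌋ with hk
      have hck : π/2 + (k:ℝ) * π ≤ th a ξ (δ/2) := by
        have h1 : ((k:ℝ)) ≤ (th a ξ (δ/2) - π/2) / π := by exact_mod_cast Int.floor_le _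
        rw [le_div_iff₀ hπ] at h1; linarith
      obtain ⟨x, hx, hxe⟩ := exists_th_eq ha hξ hδ2 hck
      refine ⟨x, ⟨hx.1, lt_of_le_of_lt hx.2 (by linarith [hδ.1])⟩, ?_⟩
      have hcos : Real.cos (th a ξ x) = 0 := by
        rw [hxe, Real.cos_add, Real.cos_pi_div_two, Real.sin_pi_div_two,
          Real.sin_int_mul_pi k]
        ring
      unfold uu; rw [hcos]; ring
  · rintro ⟨y, heq, hpos⟩
    -- deriv y is differentiable on (0, ε)
    have hg' : ∀ t ∈ Ioo (0:ℝ) ε, deriv (deriv y) t < 0 := by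
      intro t ht
      rw [heq t ht]
      have hrp : (0:ℝ) < 2*t - a*t^2 := r_pos ha (hsub ht)
      have := hpos t ht
      have h1 : 0 < lam * ((2*t - a*t^2)^2)⁻¹ * y t := by positivity
      linarith
    have hdg : ∀ t ∈ Ioo (0:ℝ) ε, DifferentiableAt ℝ (deriv y) t := by
      intro t ht
      by_contra h
      have h0 := deriv_zero_of_not_differentiableAt h
      have := hg' t ht
      rw [h0] at this; exact lt_irrefl 0 this
    have hanti : StrictAntiOn (deriv y) (Ioo 0 ε) := by
      apply strictAntiOn_of_deriv_neg (convex_Ioo 0 ε)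
      · exact fun x hx => ((hdg x hx).continuousAt).continuousWithinAt
      · rw [interior_Ioo]; exact hg'
    have hone : ∀ p ∈ Ioo (0:ℝ) ε, ∀ q ∈ Ioo (0:ℝ) ε,
        ¬DifferentiableAt ℝ y p → ¬DifferentiableAt ℝ y q → p = q := by
      intro p hp q hq hnp hnq
      apply hanti.injOn hp hq
      rw [deriv_zero_of_not_differentiableAt hnp, deriv_zero_of_not_differentiableAt hnq]
    -- find m
    obtain ⟨m, hm, hdiff⟩ : ∃ m ∈ Ioo (0:ℝ) (2/a), m ≤ ε ∧
        ∀ t ∈ Ioo (0:ℝ) m, DifferentiableAt ℝ y t := by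
      by_cases hB : ∃ p ∈ Ioo (0:ℝ) ε, ¬DifferentiableAt ℝ y p
      · obtain ⟨p, hp, hnp⟩ := hB
        refine ⟨p, ⟨hp.1, lt_trans hp.2 hε.2⟩, le_of_lt hp.2, ?_⟩
        intro t ht
        by_contra hnt
        have : t = p := hone t ⟨ht.1, lt_trans ht.2 hp.2⟩ p hp hnt hnp
        exact absurd this (ne_of_lt ht.2)
      · push_neg at hB
        exact ⟨ε, hε, le_refl ε, fun t ht => hB t ht⟩
    obtain ⟨hmε, hdiff⟩ := hdiff
    have hsubm : ∀ {t : ℝ}, t ∈ Ioo (0:ℝ) m → t ∈ Ioo (0:ℝ) ε :=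
      fun ht => ⟨ht.1, lt_of_lt_of_le ht.2 hmε⟩
    -- zeros of uu inside (0, m)
    have hm2 : m/2 ∈ Ioo (0:ℝ) (2/a) := ⟨by linarith [hm.1], by linarith [hm.1, hm.2]⟩
    set k : ℤ := ⌊(th a ξ (m/2) - π/2 - π) / π⌋ with hk
    set c : ℝ := π/2 + (k:ℝ) * π with hc
    have hck : c + π ≤ th a ξ (m/2) := by
      have h1 : ((k:ℝ)) ≤ (th a ξ (m/2) - π/2 - π) / π := by exact_mod_cast Int.floor_le _
      rw [le_div_iff₀ hπ] at h1
      rw [hc]; linarith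
    obtain ⟨t2, ht2, ht2e⟩ := exists_th_eq ha hξ hm2 hck
    have ht2' : t2 ∈ Ioo (0:ℝ) (2/a) := ⟨ht2.1, lt_of_le_of_lt ht2.2 hm2.2⟩
    obtain ⟨t1, ht1, ht1e⟩ := exists_th_eq ha hξ ht2' (c := c) (by rw [ht2e]; linarith)
    have ht1t2 : t1 < t2 := by
      rcases lt_or_eq_of_le ht1.2 with h | h
      · exact h
      · exfalso; rw [h, ht2e] at ht1e; linarith
    have ht1m : t1 ∈ Ioo (0:ℝ) m := ⟨ht1.1, by linarith [ht1.2, ht2.2, hm.1]⟩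
    have ht2m : t2 ∈ Ioo (0:ℝ) m := ⟨ht2.1, by linarith [ht2.2, hm.1]⟩
    -- trig values
    set s : ℝ := Real.cos ((k:ℝ) * π) with hs
    have hsin0 : Real.sin ((k:ℝ) * π) = 0 := Real.sin_int_mul_pi k
    have hs2 : s^2 = 1 := by
      have := Real.sin_sq_add_cos_sq ((k:ℝ) * π)
      rw [hsin0] at this; rw [hs]; nlinarith
    have hcosc : Real.cos c = 0 := by
      rw [hc, Real.cos_add, Real.cos_pi_div_two, Real.sin_pi_div_two, hsin0]; ring
    have hsinc : Real.sin c = s := by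
      rw [hc, Real.sin_add, Real.cos_pi_div_two, Real.sin_pi_div_two, hsin0, hs]; ring
    have hcosc2 : Real.cos (c + π) = 0 := by rw [Real.cos_add_pi, hcosc]; ring
    have hsinc2 : Real.sin (c + π) = -s := by rw [Real.sin_add_pi, hsinc]
    -- Wronskian
    set W : ℝ → ℝ := fun t => uu a ξ t * deriv y t - vv a ξ t * y t with hW
    have hWd : ∀ x ∈ Ioo (0:ℝ) m, HasDerivAt W 0 x := by
      intro x hx
      have hxε := hsubm hx
      have hx' : x ∈ Ioo (0:ℝ) (2/a) := hsub hxε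
      have hu := hasDerivAt_uu (ξ := ξ) ha hx'
      have hv := hasDerivAt_vv (ξ := ξ) ha hx'
      have hy : HasDerivAt y (deriv y x) x := (hdiff x hx).hasDerivAt
      have hg : HasDerivAt (deriv y) (-(lam * ((2*x - a*x^2)^2)⁻¹ * y x)) x := by
        have := (hdg x hxε).hasDerivAt
        rwa [heq x hxε] at this
      have h := (hu.mul hg).sub (hv.mul hy)
      convert h using 1
      · rfl
      · rfl
      · rfl
      have hrx : rr a x = 2*x - a*x^2 := rfl
      rw [hrx, ← hlamξ]
      ring
    have hWc : W t2 = W t1 := by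
      have hIcc : Icc t1 t2 ⊆ Ioo (0:ℝ) m := fun x hx =>
        ⟨lt_of_lt_of_le ht1m.1 hx.1, lt_of_le_of_lt hx.2 ht2m.2⟩
      exact constant_of_has_deriv_right_zero
        (fun x hx => ((hWd x (hIcc hx)).continuousAt).continuousWithinAt)
        (fun x hx => ((hWd x (hIcc (Ico_subset_Icc_self hx))).hasDerivWithinAt))
        t2 (right_mem_Icc.mpr (le_of_lt ht1t2))
    -- evaluate W at t1 and t2
    have hr1 : 0 < rr a t1 := r_pos ha ⟨ht1m.1, lt_trans ht1m.2 (by linarith [hm.2])⟩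
    have hr2 : 0 < rr a t2 := r_pos ha ht2'
    have hs1p : (0:ℝ) < Real.sqrt (rr a t1) := Real.sqrt_pos.mpr hr1
    have hs2p : (0:ℝ) < Real.sqrt (rr a t2) := Real.sqrt_pos.mpr hr2
    have hy1 := hpos t1 (hsubm ht1m)
    have hy2 := hpos t2 (hsubm ht2m)
    have hu1 : uu a ξ t1 = 0 := by unfold uu; rw [ht1e, hcosc]; ring
    have hv1 : vv a ξ t1 = -((Real.sqrt (rr a t1))⁻¹ * ξ * s) := by
      unfold vv; rw [ht1e, hcosc, hsinc]; ring
    have hu2 : uu a ξ t2 = 0 := by unfold uu; rw [ht2e, hcosc2]; ring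
    have hv2 : vv a ξ t2 = (Real.sqrt (rr a t2))⁻¹ * ξ * s := by
      unfold vv; rw [ht2e, hcosc2, hsinc2]; ring
    have hWt1 : W t1 = (Real.sqrt (rr a t1))⁻¹ * ξ * s * y t1 := by
      simp only [hW, hu1, hv1]; ring
    have hWt2 : W t2 = -((Real.sqrt (rr a t2))⁻¹ * ξ * s * y t2) := by
      simp only [hW, hu2, hv2]; ring
    -- contradiction
    have hA1 : 0 < (Real.sqrt (rr a t1))⁻¹ * ξ * y t1 := by positivity
    have hA2 : 0 < (Real.sqrt (rr a t2))⁻¹ * ξ * y t2 := by positivity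
    rw [hWt1, hWt2] at hWc
    have hsum : ((Real.sqrt (rr a t1))⁻¹ * ξ * y t1 + (Real.sqrt (rr a t2))⁻¹ * ξ * y t2) * s = 0 := by
      linarith [hWc]
    rcases mul_eq_zero.mp hsum with h | h
    · linarith
    · rw [h] at hs2; norm_num at hs2
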